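/- Let μ, μ_c, λ > 0 with λ + 2μ > 0. For X, Y ∈ ℝ^{3×3} with X n₀ = Y n₀ = 0 for a unit vector n₀, define W_mixt(X,Y) := μ⟨sym X, sym Y⟩ + μ_c⟨skew X, skew Y⟩ + (λμ/(λ+2μ)) tr(X) tr(Y). Then W_mixt(X,Y) = W_mixt(aX, aY) + ((μ+μ_c)/2) (n₀ᵀX)·(n₀ᵀY), where a = 1₃ − n₀n₀ᵀ. -/

import Mathlib

open Matrix

/-- Frobenius inner product of 3×3 real matrices. -/
def frobInner (A B : Matrix (Fin 3) (Fin 3) ℝ) : ℝ := Matrix.trace (Aᵀ * B)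

/-- Symmetric part. -/
noncomputable def symPart (A : Matrix (Fin 3) (Fin 3) ℝ) : Matrix (Fin 3) (Fin 3) ℝ :=
  (2 : ℝ)⁻¹ • (A + Aᵀ)

/-- Skew-symmetric part. -/
noncomputable def skewPart (A : Matrix (Fin 3) (Fin 3) ℝ) : Matrix (Fin 3) (Fin 3) ℝ :=
  (2 : ℝ)⁻¹ • (A - Aᵀ)

lemma trace_mul_transpose' (A B : Matrix (Fin 3) (Fin 3) ℝ) :
    Matrix.trace (A * Bᵀ) = Matrix.trace (Aᵀ * B) := by
  rw [← Matrix.trace_transpose (A * Bᵀ), Matrix.transpose_mul, Matrix.transpose_transpose,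
    Matrix.trace_mul_comm]

lemma frob_sym (A B : Matrix (Fin 3) (Fin 3) ℝ) :
    frobInner (symPart A) (symPart B)
      = (Matrix.trace (Aᵀ * B) + Matrix.trace (A * B)) / 2 := by
  simp only [frobInner, symPart, Matrix.transpose_smul, Matrix.transpose_add,
    Matrix.transpose_transpose, Matrix.smul_mul, Matrix.mul_smul, Matrix.add_mul,
    Matrix.mul_add, Matrix.trace_smul, Matrix.trace_add, smul_eq_mul]
  rw [trace_mul_transpose' A B, Matrix.trace_transpose_mul A B]
  ring

lemma frob_skew (A B : Matrix (Fin 3) (Fin 3) ℝ) :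
    frobInner (skewPart A) (skewPart B)
      = (Matrix.trace (Aᵀ * B) - Matrix.trace (A * B)) / 2 := by
  simp only [frobInner, skewPart, Matrix.transpose_smul, Matrix.transpose_sub,
    Matrix.transpose_transpose, Matrix.smul_mul, Matrix.mul_smul, Matrix.sub_mul,
    Matrix.mul_sub, Matrix.trace_smul, Matrix.trace_sub, smul_eq_mul]
  rw [trace_mul_transpose' A B, Matrix.trace_transpose_mul A B]
  ring


/-- The Cosserat bilinear form `W_mixt` splits as
`W_mixt(X,Y) = W_mixt(aX, aY) + ((μ+μ_c)/2)(n₀ᵀX)·(n₀ᵀY)` for matrices annihilating the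
unit vector `n₀` on the right, where `a = 1 − n₀n₀ᵀ`. -/
theorem Wmixt_splitting
    (μ μc lam : ℝ) (hμ : 0 < μ) (hμc : 0 < μc) (hlam : 0 < lam) (hl2μ : 0 < lam + 2 * μ)
    (n₀ : Fin 3 → ℝ) (hn : n₀ ⬝ᵥ n₀ = 1)
    (X Y : Matrix (Fin 3) (Fin 3) ℝ)
    (hX : X *ᵥ n₀ = 0) (hY : Y *ᵥ n₀ = 0) :
    let Wmixt : Matrix (Fin 3) (Fin 3) ℝ → Matrix (Fin 3) (Fin 3) ℝ → ℝ := fun A B =>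
      μ * frobInner (symPart A) (symPart B) + μc * frobInner (skewPart A) (skewPart B)
        + (lam * μ / (lam + 2 * μ)) * (Matrix.trace A * Matrix.trace B)
    let a : Matrix (Fin 3) (Fin 3) ℝ := 1 - vecMulVec n₀ n₀
    Wmixt X Y = Wmixt (a * X) (a * Y) + ((μ + μc) / 2) * ((n₀ ᵥ* X) ⬝ᵥ (n₀ ᵥ* Y)) := by
  intro Wmixt a
  set P : Matrix (Fin 3) (Fin 3) ℝ := vecMulVec n₀ n₀ with hPdef
  have key : ∀ Z : Matrix (Fin 3) (Fin 3) ℝ, Z *ᵥ n₀ = 0 → Z * P = 0 := by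
    intro Z hZ
    ext i j
    have h := congrFun hZ i
    simp only [Matrix.mulVec, dotProduct, Pi.zero_apply] at h
    simp only [hPdef, Matrix.mul_apply, vecMulVec_apply, Matrix.zero_apply]
    calc ∑ k, Z i k * (n₀ k * n₀ j) = (∑ k, Z i k * n₀ k) * n₀ j := by
          rw [Finset.sum_mul]; exact Finset.sum_congr rfl fun k _ => by ring
      _ = 0 := by rw [h]; ring
  have hXP : X * P = 0 := key X hX
  have hYP : Y * P = 0 := key Y hY
  have hPt : Pᵀ = P := by
    ext i j; simp [hPdef, vecMulVec_apply, mul_comm]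
  have hPP : P * P = P := by
    ext i j
    have h := hn
    simp only [dotProduct] at h
    simp only [hPdef, Matrix.mul_apply, vecMulVec_apply]
    calc ∑ k, n₀ i * n₀ k * (n₀ k * n₀ j) = (∑ k, n₀ k * n₀ k) * (n₀ i * n₀ j) := by
          rw [Finset.sum_mul]; exact Finset.sum_congr rfl fun k _ => by ring
      _ = n₀ i * n₀ j := by rw [h, one_mul]
  have hs : Matrix.trace (Xᵀ * P * Y) = (n₀ ᵥ* X) ⬝ᵥ (n₀ ᵥ* Y) := by
    simp only [Matrix.trace, Matrix.diag_apply, Matrix.mul_apply, Matrix.transpose_apply,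
      hPdef, vecMulVec_apply, Matrix.vecMul, dotProduct, Fin.sum_univ_three]
    ring
  have haT : aᵀ = a := by
    simp only [a, ← hPdef, Matrix.transpose_sub, Matrix.transpose_one, hPt]
  have haa : a * a = a := by
    simp only [a, ← hPdef, Matrix.sub_mul, Matrix.mul_sub, Matrix.one_mul, Matrix.mul_one, hPP]
    abel
  have hXa : X * a = X := by
    simp only [a, ← hPdef, Matrix.mul_sub, Matrix.mul_one, hXP, sub_zero]
  have hYa : Y * a = Y := by
    simp only [a, ← hPdef, Matrix.mul_sub, Matrix.mul_one, hYP, sub_zero]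
  have t1 : Matrix.trace ((a * X)ᵀ * (a * Y))
      = Matrix.trace (Xᵀ * Y) - (n₀ ᵥ* X) ⬝ᵥ (n₀ ᵥ* Y) := by
    have h1 : (a * X)ᵀ * (a * Y) = Xᵀ * Y - Xᵀ * P * Y := by
      rw [Matrix.transpose_mul, haT, Matrix.mul_assoc, ← Matrix.mul_assoc a a Y, haa,
        ← Matrix.mul_assoc]
      simp only [a, ← hPdef, Matrix.mul_sub, Matrix.mul_one, Matrix.sub_mul]
    rw [h1, Matrix.trace_sub, hs]
  have t2 : Matrix.trace ((a * X) * (a * Y)) = Matrix.trace (X * Y) := by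
    have h1 : (a * X) * (a * Y) = a * (X * Y) := by
      rw [Matrix.mul_assoc a X (a * Y), ← Matrix.mul_assoc X a Y, hXa]
    rw [h1, Matrix.trace_mul_comm, Matrix.mul_assoc, hYa]
  have t3 : Matrix.trace (a * X) = Matrix.trace X := by
    rw [Matrix.trace_mul_comm, hXa]
  have t4 : Matrix.trace (a * Y) = Matrix.trace Y := by
    rw [Matrix.trace_mul_comm, hYa]
  simp only [Wmixt, frob_sym, frob_skew, t1, t2, t3, t4]
  ring
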